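/- Let u₊ and u₋ be convex functions on ℝⁿ, let Λ ⊂ dom(u) be convex, and suppose there are compact sets Ω̄₊, Ω̄₋ ⊂ ℝⁿ with ∂u₊(Λ) ⊂ Ω̄₊ and ∂u₋(Λ) ⊂ Ω̄₋, which are strongly separated by the hyperplane {xⁿ = a₀} with spacing d₀ > 0 (i.e. every point of Ω̄₋ has n-th coordinate < a₀ − d₀ and every point of Ω̄₊ has n-th coordinate > a₀ + d₀). Set u := max{u₊, u₋}. Then for each x' in the projection Λ' of Λ onto the first n−1 coordinates, there is at most one t with (x', t) ∈ Λ and u₊(x', t) = u₋(x', t); moreover this t is given explicitly by h(x') := (u*_{x'}(a₀+d₀) − u*_{x'}(a₀−d₀))/(2d₀), where u*_{x'} is the Legendre transform of t ↦ u(x', t). -/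

import Mathlib

open Set

noncomputable section

/-- The subdifferential of `f : ℝⁿ → ℝ` at `x`. -/
def subdiff {n : ℕ} (f : EuclideanSpace ℝ (Fin n) → ℝ) (x : EuclideanSpace ℝ (Fin n)) :
    Set (EuclideanSpace ℝ (Fin n)) :=
  {p | ∀ y, f x + inner ℝ p (y - x) ≤ f y}

/-- Append a last coordinate `t` to `x' ∈ ℝⁿ`, giving a point of `ℝⁿ⁺¹`. -/
def snocPt {n : ℕ} (x' : EuclideanSpace ℝ (Fin n)) (t : ℝ) :
    EuclideanSpace ℝ (Fin (n + 1)) :=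
  (EuclideanSpace.equiv (Fin (n + 1)) ℝ).symm (Fin.snoc (fun i => x' i) t)

/-- Projection onto the first `n` coordinates. -/
def projPt {n : ℕ} (x : EuclideanSpace ℝ (Fin (n + 1))) : EuclideanSpace ℝ (Fin n) :=
  (EuclideanSpace.equiv (Fin n) ℝ).symm (fun i => x i.castSucc)

/-- The partial Legendre transform, in the last variable, of `u = max {u₊, u₋}`. -/
def Lstar {n : ℕ} (up um : EuclideanSpace ℝ (Fin (n + 1)) → ℝ)
    (x' : EuclideanSpace ℝ (Fin n)) (s : ℝ) : ℝ :=
  sSup (Set.range fun t : ℝ => t * s - max (up (snocPt x' t)) (um (snocPt x' t)))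

lemma snocPt_apply_castSucc {n : ℕ} (x' : EuclideanSpace ℝ (Fin n)) (t : ℝ) (j : Fin n) :
    snocPt x' t j.castSucc = x' j := by
  simp [snocPt, EuclideanSpace.equiv, Fin.snoc]

lemma snocPt_apply_last {n : ℕ} (x' : EuclideanSpace ℝ (Fin n)) (t : ℝ) :
    snocPt x' t (Fin.last n) = t := by
  simp [snocPt, EuclideanSpace.equiv, Fin.snoc]

/-- Existence of subgradients for finite convex functions on `ℝᵐ`. -/
lemma exists_mem_subdiff {m : ℕ} {f : EuclideanSpace ℝ (Fin m) → ℝ}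
    (hf : ConvexOn ℝ univ f) (x : EuclideanSpace ℝ (Fin m)) :
    ∃ p, p ∈ subdiff f x := by
  have hcont : Continuous f := continuousOn_univ.mp
    (hf.continuousOn isOpen_univ)
  have hSconv : Convex ℝ {p : EuclideanSpace ℝ (Fin m) × ℝ | p.1 ∈ univ ∧ f p.1 < p.2} :=
    hf.convex_strict_epigraph
  have hSopen : IsOpen {p : EuclideanSpace ℝ (Fin m) × ℝ | p.1 ∈ univ ∧ f p.1 < p.2} := by
    have : {p : EuclideanSpace ℝ (Fin m) × ℝ | p.1 ∈ univ ∧ f p.1 < p.2}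
        = {p : EuclideanSpace ℝ (Fin m) × ℝ | f p.1 < p.2} := by ext p; simp
    rw [this]
    exact isOpen_lt (hcont.comp continuous_fst) continuous_snd
  have hx : ((x, f x) : EuclideanSpace ℝ (Fin m) × ℝ)
      ∉ {p : EuclideanSpace ℝ (Fin m) × ℝ | p.1 ∈ univ ∧ f p.1 < p.2} := by simp
  obtain ⟨g, hg⟩ := geometric_hahn_banach_open_point hSconv hSopen hx
  have hdec : ∀ (y : EuclideanSpace ℝ (Fin m)) (s : ℝ),
      g (y, s) = g (y, 0) + s * g (0, 1) := by
    intro y s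
    have : ((y, s) : EuclideanSpace ℝ (Fin m) × ℝ)
        = (y, 0) + s • ((0 : EuclideanSpace ℝ (Fin m)), (1 : ℝ)) := by
      simp [Prod.ext_iff]
    rw [this, map_add, map_smul, smul_eq_mul]
  set c : ℝ := g (0, 1) with hc
  have hcneg : c < 0 := by
    have h1 : ((x, f x + 1) : EuclideanSpace ℝ (Fin m) × ℝ)
        ∈ {p : EuclideanSpace ℝ (Fin m) × ℝ | p.1 ∈ univ ∧ f p.1 < p.2} := by simp
    have := hg _ h1
    rw [hdec x (f x + 1), hdec x (f x)] at this
    linarith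
  have hne : c ≠ 0 := hcneg.ne
  have hpos : (0 : ℝ) < -c := by linarith
  have key : ∀ y : EuclideanSpace ℝ (Fin m),
      g (y, 0) + f y * c ≤ g (x, 0) + f x * c := by
    intro y
    have step : ∀ ε > (0 : ℝ), g (y, 0) + (f y + ε) * c < g (x, 0) + f x * c := by
      intro ε hε
      have h1 : ((y, f y + ε) : EuclideanSpace ℝ (Fin m) × ℝ)
          ∈ {p : EuclideanSpace ℝ (Fin m) × ℝ | p.1 ∈ univ ∧ f p.1 < p.2} := by simp [hε]
      have := hg _ h1
      rwa [hdec y (f y + ε), hdec x (f x)] at this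
    by_contra hcon
    push_neg at hcon
    set δ := g (y, 0) + f y * c - (g (x, 0) + f x * c) with hδ
    have hδpos : 0 < δ := by linarith
    have hstep := step (δ / (-c)) (div_pos hδpos hpos)
    have hmul : (δ / (-c)) * c = -δ := by
      field_simp
    nlinarith
  set L : EuclideanSpace ℝ (Fin m) →L[ℝ] ℝ
    := g.comp (ContinuousLinearMap.inl ℝ (EuclideanSpace ℝ (Fin m)) ℝ) with hL
  refine ⟨(InnerProductSpace.toDual ℝ (EuclideanSpace ℝ (Fin m))).symm ((-c)⁻¹ • L),
    fun y => ?_⟩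
  have hip : (inner ℝ ((InnerProductSpace.toDual ℝ (EuclideanSpace ℝ (Fin m))).symm
        ((-c)⁻¹ • L)) (y - x) : ℝ) = (-c)⁻¹ * (g (y - x, 0)) := by
    rw [InnerProductSpace.toDual_symm_apply]
    simp [hL, smul_eq_mul]
  rw [hip]
  have hsub : g (y - x, 0) = g (y, 0) - g (x, 0) := by
    have : ((y - x, (0:ℝ)) : EuclideanSpace ℝ (Fin m) × ℝ) = (y, 0) - (x, 0) := by
      simp [Prod.ext_iff]
    rw [this, map_sub]
  rw [hsub]
  have h3 : (-c)⁻¹ * (g (y, 0) - g (x, 0)) ≤ f y - f x := by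
    rw [inv_mul_le_iff₀ hpos]
    nlinarith [key y]
  linarith

theorem explicit_function_uniqueness (n : ℕ)
    (up um : EuclideanSpace ℝ (Fin (n + 1)) → ℝ)
    (Λ Ωp Ωm : Set (EuclideanSpace ℝ (Fin (n + 1))))
    (hup : ConvexOn ℝ univ up) (hum : ConvexOn ℝ univ um)
    (hΛ : Convex ℝ Λ) (hΩp : IsCompact Ωp) (hΩm : IsCompact Ωm)
    (hsubp : ∀ x ∈ Λ, subdiff up x ⊆ Ωp) (hsubm : ∀ x ∈ Λ, subdiff um x ⊆ Ωm)
    (a₀ d₀ : ℝ) (hd₀ : 0 < d₀)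
    (hsepm : ∀ p ∈ Ωm, p (Fin.last n) < a₀ - d₀)
    (hsepp : ∀ p ∈ Ωp, a₀ + d₀ < p (Fin.last n)) :
    ∀ (x' : EuclideanSpace ℝ (Fin n)) (t : ℝ),
      snocPt x' t ∈ Λ → up (snocPt x' t) = um (snocPt x' t) →
      t = (Lstar up um x' (a₀ + d₀) - Lstar up um x' (a₀ - d₀)) / (2 * d₀) := by
  intro x' t₀ hmem heq
  set x₀ := snocPt x' t₀ with hx₀
  obtain ⟨p, hp⟩ := exists_mem_subdiff hup x₀
  obtain ⟨q, hq⟩ := exists_mem_subdiff hum x₀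
  have hpΩ : p ∈ Ωp := hsubp _ hmem hp
  have hqΩ : q ∈ Ωm := hsubm _ hmem hq
  set pn := p (Fin.last n) with hpn
  set qn := q (Fin.last n) with hqn
  have hpn' : a₀ + d₀ < pn := hsepp p hpΩ
  have hqn' : qn < a₀ - d₀ := hsepm q hqΩ
  set u : ℝ → ℝ := fun t => max (up (snocPt x' t)) (um (snocPt x' t)) with hu
  have hu₀p : u t₀ = up x₀ := by
    show max (up (snocPt x' t₀)) (um (snocPt x' t₀)) = up x₀
    rw [← hx₀, heq, max_self]
  have hu₀m : u t₀ = um x₀ := by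
    show max (up (snocPt x' t₀)) (um (snocPt x' t₀)) = um x₀
    rw [← hx₀, heq, max_self]
  -- inner product computation
  have hinner : ∀ (r : EuclideanSpace ℝ (Fin (n+1))) (t : ℝ),
      (inner ℝ r (snocPt x' t - x₀) : ℝ) = (t - t₀) * r (Fin.last n) := by
    intro r t
    rw [PiLp.inner_apply]
    have hterm : ∀ i : Fin (n+1),
        (inner ℝ (r i) ((snocPt x' t - x₀) i) : ℝ) = r i * (snocPt x' t i - x₀ i) := by
      intro i
      have h1 : (snocPt x' t - x₀) i = snocPt x' t i - x₀ i := rfl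
      rw [h1]
      simp [RCLike.inner_apply, conj_trivial, mul_comm]
    rw [Finset.sum_congr rfl (fun i _ => hterm i)]
    rw [Fin.sum_univ_castSucc]
    have hz : ∀ j : Fin n,
        r j.castSucc * (snocPt x' t j.castSucc - x₀ j.castSucc) = 0 := by
      intro j
      rw [hx₀, snocPt_apply_castSucc, snocPt_apply_castSucc]
      ring
    rw [Finset.sum_congr rfl (fun j _ => hz j), Finset.sum_const_zero]
    rw [hx₀, snocPt_apply_last, snocPt_apply_last]
    ring
  have hup' : ∀ t : ℝ, u t₀ + (t - t₀) * pn ≤ u t := by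
    intro t
    have := hp (snocPt x' t)
    rw [hinner p t] at this
    calc u t₀ + (t - t₀) * pn = up x₀ + (t - t₀) * pn := by rw [hu₀p]
      _ ≤ up (snocPt x' t) := this
      _ ≤ u t := le_max_left _ _
  have hum' : ∀ t : ℝ, u t₀ + (t - t₀) * qn ≤ u t := by
    intro t
    have := hq (snocPt x' t)
    rw [hinner q t] at this
    calc u t₀ + (t - t₀) * qn = um x₀ + (t - t₀) * qn := by rw [hu₀m]
      _ ≤ um (snocPt x' t) := this
      _ ≤ u t := le_max_right _ _
  have hL : ∀ s : ℝ, qn ≤ s → s ≤ pn → Lstar up um x' s = t₀ * s - u t₀ := by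
    intro s hs1 hs2
    have : IsGreatest (Set.range fun t : ℝ => t * s - u t) (t₀ * s - u t₀) := by
      constructor
      · exact ⟨t₀, rfl⟩
      · rintro v ⟨t, rfl⟩
        show t * s - u t ≤ t₀ * s - u t₀
        rcases le_total t₀ t with h | h
        · have h1 := hup' t
          nlinarith [mul_le_mul_of_nonneg_left hs2 (sub_nonneg.mpr h)]
        · have h1 := hum' t
          nlinarith [mul_le_mul_of_nonpos_left hs1 (sub_nonpos.mpr h)]
    exact this.csSup_eq
  have h1 := hL (a₀ + d₀) (by linarith) (by linarith)
  have h2 := hL (a₀ - d₀) (by linarith) (by linarith)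
  rw [h1, h2]
  field_simp
  ring
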